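/- arXiv:0704.2149 — 2 statements merged into one kernel-verified Lean document; each statement's English description precedes it below -/
import Mathlib

section
/- Let θ(z) = z + c_1 z² + c_2 z³ + … be a formal power series over ℂ and H(1+ξ) = A_0 + A_1 ξ + A_2 ξ² + … a formal power series in ξ. Consider the two-variable formal power series Θ(z,u) := (θ(z)−θ(u))/(z−u) = 1 + ∑_{j≥1} c_j (∑_{a+b=j} z^a u^b), which has constant term 1. Then H(Θ(z,u)) = ∑_m A_{|m|} · (|m|!/∏_j m_j!) · c^m · ∑_{p+q=‖m‖} W_p(m) z^p u^q, where the outer sum is over finitely supported sequences m of nonnegative integers and W_p(m) denotes the coefficient of t^p in ∏_{j≥1} (1 + t + ⋯ + t^j)^{m_j} (equivalently W_p(m) = 𝒫_p(Ñ_1, …, Ñ_p) with Ñ_p = −∑_j m_j + ∑_{j: (j+1) divides p} (j+1)·m_j). -/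
open PowerSeries Finset

/-- Formal composition `H(1 + u) = ∑ₖ Aₖ uᵏ` of a one-variable series
`H(1+ξ) = ∑ₖ Aₖ ξᵏ` with a two-variable series `1 + u`, where `u` has zero constant
term: only terms with `k ≤ ` total degree contribute. -/
noncomputable def compMv (A : ℕ → ℂ) (u : MvPowerSeries (Fin 2) ℂ) :
    MvPowerSeries (Fin 2) ℂ :=
  fun d => ∑ k ∈ Finset.range ((d 0 + d 1) + 1), A k * MvPowerSeries.coeff (R := ℂ) d (u ^ k)

/-- The two-variable series `Θ(z,u) = (θ(z) − θ(u))/(z − u) = 1 + ∑_{j≥1} cⱼ ∑_{a+b=j} z^a u^b`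
for `θ(z) = z + c₁z² + c₂z³ + ⋯`: its coefficient at `z^a u^b` is `c_{a+b}` (with `c₀ = 1`). -/
noncomputable def ThetaQuot (c : ℕ → ℂ) : MvPowerSeries (Fin 2) ℂ :=
  fun d => if d 0 + d 1 = 0 then 1 else c (d 0 + d 1)

/-- `W_p(m)`: the coefficient of `t^p` in `∏_{j≥1} (1 + t + ⋯ + tʲ)^{mⱼ}`
(equivalently `𝒫_p(Ñ₁,…,Ñ_p)` with `Ñ_p = −∑ⱼ mⱼ + ∑_{(j+1) ∣ p} (j+1)·mⱼ`). -/
noncomputable def Wcoeff (m : ℕ →₀ ℕ) (p : ℕ) : ℂ :=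
  PowerSeries.coeff (R := ℂ) p
    (∏ j ∈ m.support, (∑ i ∈ Finset.range (j + 1), (PowerSeries.X : PowerSeries ℂ) ^ i) ^ m j)

/-! ### Auxiliary lemmas -/

lemma fin2_ext {e f : Fin 2 →₀ ℕ} (h0 : e 0 = f 0) (h1 : e 1 = f 1) : e = f := by
  ext i; fin_cases i <;> assumption

lemma fin2_degree (e : Fin 2 →₀ ℕ) : e.degree = e 0 + e 1 := by
  rw [Finsupp.degree_apply, Finset.sum_subset (Finset.subset_univ e.support)
    (by intro x _ hx; simpa using Finsupp.notMem_support_iff.mp hx)]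
  exact Fin.sum_univ_two e

lemma dcoords (a b : ℕ) : ((Finsupp.single (0 : Fin 2) a + Finsupp.single 1 b : Fin 2 →₀ ℕ) 0 = a)
    ∧ ((Finsupp.single (0 : Fin 2) a + Finsupp.single 1 b : Fin 2 →₀ ℕ) 1 = b) := by
  constructor <;> simp [Finsupp.single_apply]

lemma Nat.multinomial_of_support_subset {t s : Finset ℕ} {f : ℕ → ℕ} (hts : t ⊆ s)
    (h : ∀ j ∈ s, j ∉ t → f j = 0) : Nat.multinomial s f = Nat.multinomial t f := by
  unfold Nat.multinomial
  rw [Finset.sum_subset hts (fun x hx hxt => h x hx hxt),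
    Finset.prod_subset hts (fun x hx hxt => by rw [h x hx hxt]; rfl)]

noncomputable def Spoly (j : ℕ) : MvPolynomial (Fin 2) ℂ :=
  ∑ i ∈ Finset.range (j + 1), MvPolynomial.X 0 ^ i * MvPolynomial.X 1 ^ (j - i)

lemma Spoly_homog (j : ℕ) : (Spoly j).IsHomogeneous j := by
  apply MvPolynomial.IsHomogeneous.sum
  intro i hi
  have hij : i ≤ j := Nat.lt_succ_iff.mp (Finset.mem_range.mp hi)
  have := (((MvPolynomial.isHomogeneous_X ℂ (0 : Fin 2)).pow i).mul
    ((MvPolynomial.isHomogeneous_X ℂ (1 : Fin 2)).pow (j - i)))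
  simpa [Nat.add_sub_cancel' hij] using this

lemma Spoly_coeff (j : ℕ) (e : Fin 2 →₀ ℕ) :
    MvPolynomial.coeff e (Spoly j) = if e 0 + e 1 = j then 1 else 0 := by
  unfold Spoly
  have key : ∀ i : ℕ, MvPolynomial.coeff e
      (MvPolynomial.X (0:Fin 2) ^ i * MvPolynomial.X 1 ^ (j-i) : MvPolynomial (Fin 2) ℂ)
      = if e 0 = i ∧ e 1 = j - i then 1 else 0 := by
    intro i
    rw [MvPolynomial.X_pow_eq_monomial, MvPolynomial.X_pow_eq_monomial,
      MvPolynomial.monomial_mul, mul_one, MvPolynomial.coeff_monomial]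
    congr 1
    simp only [eq_iff_iff]
    constructor
    · rintro rfl
      exact ⟨(dcoords i (j-i)).1, (dcoords i (j-i)).2⟩
    · rintro ⟨h0, h1⟩
      exact (fin2_ext (by rw [(dcoords i (j-i)).1, h0]) (by rw [(dcoords i (j-i)).2, h1])).symm
  rw [MvPolynomial.coeff_sum]
  simp_rw [key]
  by_cases h : e 0 + e 1 = j
  · rw [if_pos h, Finset.sum_eq_single (e 0)]
    · rw [if_pos ⟨rfl, by omega⟩]
    · intro i _ hne
      rw [if_neg (by tauto)]
    · intro habs
      exact absurd (Finset.mem_range.mpr (by omega)) habs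
  · rw [if_neg h, Finset.sum_eq_zero]
    intro i hi
    rw [if_neg]
    rintro ⟨h0, h1⟩
    have : i ≤ j := Nat.lt_succ_iff.mp (Finset.mem_range.mp hi)
    omega

lemma coeff_prod_Spoly (N p q : ℕ) (hpq : p + q = N) (m : ℕ →₀ ℕ)
    (hsupp : m.support ⊆ Finset.Icc 1 N) :
    MvPolynomial.coeff (Finsupp.single (0:Fin 2) p + Finsupp.single 1 q)
        (∏ j ∈ Finset.Icc 1 N, Spoly j ^ m j) =
      if (∑ j ∈ Finset.Icc 1 N, j * m j) = N then Wcoeff m p else 0 := by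
  set d : Fin 2 →₀ ℕ := Finsupp.single (0:Fin 2) p + Finsupp.single 1 q with hd
  set P : MvPolynomial (Fin 2) ℂ := ∏ j ∈ Finset.Icc 1 N, Spoly j ^ m j with hP
  set W : ℕ := ∑ j ∈ Finset.Icc 1 N, j * m j with hW
  have hPhom : P.IsHomogeneous W :=
    MvPolynomial.IsHomogeneous.prod _ _ _ (fun j _ => by
      simpa [mul_comm] using (Spoly_homog j).pow (m j))
  have hddeg : d.degree = N := by rw [fin2_degree, (dcoords p q).1, (dcoords p q).2, hpq]
  by_cases hWN : W = N
  · rw [if_pos hWN]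
    set ev : MvPolynomial (Fin 2) ℂ →ₐ[ℂ] Polynomial ℂ :=
      MvPolynomial.aeval (fun i : Fin 2 => if i = 0 then Polynomial.X else 1) with hev
    have evmon : ∀ (v : Fin 2 →₀ ℕ) (a : ℂ),
        ev (MvPolynomial.monomial v a) = Polynomial.C a * Polynomial.X ^ (v 0) := by
      intro v a
      rw [hev, MvPolynomial.aeval_monomial]
      congr 1
      rw [Finsupp.prod_fintype _ _ (fun i => pow_zero _), Fin.prod_univ_two]
      simp
    have step1 : Polynomial.coeff (ev P) p = MvPolynomial.coeff d P := by
      conv_lhs => rw [MvPolynomial.as_sum P]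
      rw [map_sum, Polynomial.finset_sum_coeff]
      have : ∀ v ∈ P.support, Polynomial.coeff
          (ev ((MvPolynomial.monomial v) (MvPolynomial.coeff v P))) p
          = if v 0 = p then MvPolynomial.coeff v P else 0 := by
        intro v _
        rw [evmon, Polynomial.coeff_C_mul, Polynomial.coeff_X_pow]
        by_cases h : v 0 = p
        · simp [h]
        · rw [if_neg (fun hh => h hh.symm), mul_zero, if_neg h]
      rw [Finset.sum_congr rfl this, Finset.sum_eq_single d]
      · rw [if_pos (dcoords p q).1]
      · intro v hv hvd
        by_cases h0 : v 0 = p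
        · exfalso
          have hco := MvPolynomial.mem_support_iff.mp hv
          have hdeg : v.degree = W := by
            by_contra hne
            exact hco (hPhom.coeff_eq_zero hne)
          rw [fin2_degree, h0, hWN, ← hpq] at hdeg
          exact hvd (fin2_ext (h0.trans (dcoords p q).1.symm)
            (by rw [(dcoords p q).2]; omega))
        · rw [if_neg h0]
      · intro hdns
        rw [if_pos (dcoords p q).1]
        exact MvPolynomial.notMem_support_iff.mp hdns
    have evS : ∀ j : ℕ, ev (Spoly j) = ∑ i ∈ Finset.range (j + 1), Polynomial.X ^ i := by
      intro j
      rw [Spoly, map_sum]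
      apply Finset.sum_congr rfl
      intro i _
      rw [map_mul, map_pow, map_pow, hev, MvPolynomial.aeval_X, MvPolynomial.aeval_X]
      simp
    have step2 : ev P
        = ∏ j ∈ Finset.Icc 1 N, (∑ i ∈ Finset.range (j + 1), Polynomial.X ^ i) ^ m j := by
      rw [hP, map_prod]
      exact Finset.prod_congr rfl fun j _ => by rw [map_pow, evS]
    have coe_eq : ∀ (f : Polynomial ℂ),
        (↑f : PowerSeries ℂ) = Polynomial.coeToPowerSeries.ringHom f := fun f => rfl
    have hser : (∏ j ∈ Finset.Icc 1 N,
          (∑ i ∈ Finset.range (j+1), (PowerSeries.X : PowerSeries ℂ)^i)^ m j)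
        = ((∏ j ∈ Finset.Icc 1 N,
          (∑ i ∈ Finset.range (j+1), Polynomial.X ^ i)^ m j : Polynomial ℂ) : PowerSeries ℂ) := by
      rw [coe_eq, map_prod]
      refine Finset.prod_congr rfl fun j _ => ?_
      rw [map_pow, map_sum]
      refine congrArg (· ^ m j) (Finset.sum_congr rfl fun i _ => ?_)
      rw [map_pow]
      congr 1
      exact (Polynomial.coe_X (R := ℂ)).symm
    have step3 : Wcoeff m p = Polynomial.coeff
        (∏ j ∈ Finset.Icc 1 N, (∑ i ∈ Finset.range (j + 1), Polynomial.X ^ i) ^ m j) p := by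
      rw [Wcoeff, Finset.prod_subset hsupp
        (fun x _ hx => by rw [Finsupp.notMem_support_iff.mp hx, pow_zero]), hser,
        Polynomial.coeff_coe]
    rw [step3, ← step2, step1]
  · rw [if_neg hWN]
    exact hPhom.coeff_eq_zero (by rw [hddeg]; exact fun h => hWN h.symm)

lemma pow_agree {f g : MvPowerSeries (Fin 2) ℂ} {d : Fin 2 →₀ ℕ}
    (h : ∀ e ≤ d, MvPowerSeries.coeff (R := ℂ) e f = MvPowerSeries.coeff (R := ℂ) e g) (k : ℕ) :
    ∀ e ≤ d, MvPowerSeries.coeff (R := ℂ) e (f ^ k) = MvPowerSeries.coeff (R := ℂ) e (g ^ k) := by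
  induction k with
  | zero => intro e _; rw [pow_zero, pow_zero]
  | succ n ih =>
    intro e he
    rw [pow_succ, pow_succ, MvPowerSeries.coeff_mul, MvPowerSeries.coeff_mul]
    refine Finset.sum_congr rfl fun x hx => ?_
    have hsum : x.1 + x.2 = e := Finset.HasAntidiagonal.mem_antidiagonal.mp hx
    have h1 : x.1 ≤ e := hsum ▸ le_self_add
    have h2 : x.2 ≤ e := hsum ▸ le_add_self
    rw [ih x.1 (h1.trans he), h x.2 (h2.trans he)]

/-- The truncated polynomial version of `ThetaQuot c - 1`. -/
noncomputable def Tpoly (c : ℕ → ℂ) (N : ℕ) : MvPolynomial (Fin 2) ℂ :=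
  ∑ j ∈ Finset.Icc 1 N, MvPolynomial.C (c j) * Spoly j

lemma Tpoly_coeff (c : ℕ → ℂ) (N : ℕ) (e : Fin 2 →₀ ℕ) :
    MvPolynomial.coeff e (Tpoly c N)
      = if 1 ≤ e 0 + e 1 ∧ e 0 + e 1 ≤ N then c (e 0 + e 1) else 0 := by
  rw [Tpoly, MvPolynomial.coeff_sum]
  simp_rw [MvPolynomial.coeff_C_mul, Spoly_coeff]
  by_cases h : 1 ≤ e 0 + e 1 ∧ e 0 + e 1 ≤ N
  · rw [if_pos h, Finset.sum_eq_single (e 0 + e 1)]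
    · rw [if_pos rfl, mul_one]
    · intro j _ hne
      rw [if_neg (fun hh => hne hh.symm), mul_zero]
    · intro habs
      exact absurd (Finset.mem_Icc.mpr h) habs
  · rw [if_neg h, Finset.sum_eq_zero]
    intro j hj
    have hj' := Finset.mem_Icc.mp hj
    rw [if_neg (by omega), mul_zero]

lemma theta_agree (c : ℕ → ℂ) (N : ℕ) (e : Fin 2 →₀ ℕ) (he : e 0 + e 1 ≤ N) :
    MvPowerSeries.coeff (R := ℂ) e (ThetaQuot c - 1)
      = MvPowerSeries.coeff (R := ℂ) e (Tpoly c N : MvPolynomial (Fin 2) ℂ) := by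
  rw [map_sub, MvPowerSeries.coeff_one, MvPolynomial.coeff_coe, Tpoly_coeff]
  have hth : MvPowerSeries.coeff (R := ℂ) e (ThetaQuot c)
      = if e 0 + e 1 = 0 then 1 else c (e 0 + e 1) := rfl
  rw [hth]
  have he0 : e = 0 ↔ e 0 + e 1 = 0 := by
    constructor
    · rintro rfl; simp
    · intro h
      exact fin2_ext (by simpa using (by omega : e 0 = 0)) (by simpa using (by omega : e 1 = 0))
  by_cases h : e 0 + e 1 = 0
  · rw [if_pos h, if_pos (he0.mpr h), if_neg (by omega), sub_self]
  · rw [if_neg h, if_neg (fun hh => h (he0.mp hh)), sub_zero, if_pos ⟨by omega, he⟩]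

lemma coeff_theta_pow (c : ℕ → ℂ) (p q k : ℕ) :
    MvPowerSeries.coeff (R := ℂ) (Finsupp.single (0:Fin 2) p + Finsupp.single 1 q)
        ((ThetaQuot c - 1) ^ k)
      = MvPolynomial.coeff (Finsupp.single (0:Fin 2) p + Finsupp.single 1 q)
        ((Tpoly c (p + q)) ^ k) := by
  set d : Fin 2 →₀ ℕ := Finsupp.single (0:Fin 2) p + Finsupp.single 1 q with hd
  have hagree : ∀ e ≤ d, MvPowerSeries.coeff (R := ℂ) e (ThetaQuot c - 1)
      = MvPowerSeries.coeff (R := ℂ) e (Tpoly c (p+q) : MvPolynomial (Fin 2) ℂ) := by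
    intro e he
    apply theta_agree
    have h0 : e 0 ≤ d 0 := he 0
    have h1 : e 1 ≤ d 1 := he 1
    rw [(dcoords p q).1] at h0
    rw [(dcoords p q).2] at h1
    omega
  rw [pow_agree hagree k d le_rfl, ← MvPolynomial.coeff_coe]
  congr 1
  exact (map_pow (MvPolynomial.coeToMvPowerSeries.ringHom (R := ℂ) (σ := Fin 2)) _ _).symm

open PowerSeries Finset

lemma coeff_Tpow (c : ℕ → ℂ) (p q k : ℕ) :
    MvPolynomial.coeff (Finsupp.single (0:Fin 2) p + Finsupp.single 1 q) ((Tpoly c (p+q)) ^ k)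
      = ∑ M ∈ Finset.finsuppAntidiag (Finset.Icc 1 (p+q)) k,
          (M.multinomial : ℂ) * (∏ j ∈ M.support, c j ^ M j) *
            (if (M.sum fun j e => j * e) = p + q then Wcoeff M p else 0) := by
  rw [Tpoly, Finset.sum_pow_eq_sum_piAntidiag, MvPolynomial.coeff_sum]
  refine Finset.sum_bij
    (fun m hm => (⟨(Finset.Icc 1 (p+q)).filter (fun j => m j ≠ 0), m, fun a => by
      simp only [Finset.mem_filter]
      exact ⟨fun h => h.2, fun h => ⟨(Finset.mem_piAntidiag.mp hm).2 a h, h⟩⟩⟩ : ℕ →₀ ℕ))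
    ?_ ?_ ?_ ?_
  · intro m hm
    rw [Finset.mem_finsuppAntidiag]
    exact ⟨(Finset.mem_piAntidiag.mp hm).1, Finset.filter_subset _ _⟩
  · intro m hm m' hm' heq
    exact congrArg (DFunLike.coe) heq
  · intro M hM
    obtain ⟨hsum, hsupp⟩ := Finset.mem_finsuppAntidiag.mp hM
    exact ⟨⇑M, Finset.mem_piAntidiag.mpr
      ⟨hsum, fun i hi => hsupp (Finsupp.mem_support_iff.mpr hi)⟩,
      DFunLike.coe_injective rfl⟩
  · intro m hm
    obtain ⟨hsum, hcond⟩ := Finset.mem_piAntidiag.mp hm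
    show _ = (fun M : ℕ →₀ ℕ => (M.multinomial : ℂ) * (∏ j ∈ M.support, c j ^ M j) *
      (if (M.sum fun j e => j * e) = p + q then Wcoeff M p else 0)) _
    set M : ℕ →₀ ℕ := (⟨(Finset.Icc 1 (p+q)).filter (fun j => m j ≠ 0), m, fun a => by
      simp only [Finset.mem_filter]
      exact ⟨fun h => h.2, fun h => ⟨hcond a h, h⟩⟩⟩ : ℕ →₀ ℕ) with hM
    simp only []
    have hMc : (M : ℕ → ℕ) = m := rfl
    have hMsupp : M.support ⊆ Finset.Icc 1 (p+q) := Finset.filter_subset _ _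
    have hprod : ∏ j ∈ Finset.Icc 1 (p+q), (MvPolynomial.C (c j) * Spoly j) ^ m j
        = MvPolynomial.C (∏ j ∈ Finset.Icc 1 (p+q), c j ^ m j)
          * ∏ j ∈ Finset.Icc 1 (p+q), Spoly j ^ M j := by
      simp_rw [mul_pow]
      rw [Finset.prod_mul_distrib, map_prod]
      simp_rw [map_pow, hMc]
    have hcast : ((Nat.multinomial (Finset.Icc 1 (p+q)) m : ℕ) : MvPolynomial (Fin 2) ℂ)
        = MvPolynomial.C ((Nat.multinomial (Finset.Icc 1 (p+q)) m : ℕ) : ℂ) :=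
      (map_natCast MvPolynomial.C _).symm
    rw [hprod, hcast, ← mul_assoc, ← map_mul, MvPolynomial.coeff_C_mul,
      coeff_prod_Spoly (p+q) p q rfl M hMsupp]
    have hmult : Nat.multinomial (Finset.Icc 1 (p+q)) m = M.multinomial := by
      rw [Finsupp.multinomial_eq]
      exact Nat.multinomial_of_support_subset hMsupp (fun j _ hj => by
        by_contra h
        exact hj (Finsupp.mem_support_iff.mpr h))
    have hcprod : ∏ j ∈ Finset.Icc 1 (p+q), c j ^ m j = ∏ j ∈ M.support, c j ^ M j := by
      rw [Finset.prod_subset hMsupp (fun x _ hx => by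
        rw [Finsupp.notMem_support_iff.mp hx, pow_zero])]
      exact Finset.prod_congr rfl fun x _ => rfl
    have hweight : (∑ j ∈ Finset.Icc 1 (p+q), j * M j) = M.sum fun j e => j * e :=
      (Finsupp.sum_of_support_subset M hMsupp _ (fun i _ => mul_zero i)).symm
    rw [hmult, hcprod, hweight]

open PowerSeries Finset

/-- For `θ(z) = z + c₁z² + ⋯` and `H(1+ξ) = A₀ + A₁ξ + ⋯`, one has
`H(Θ(z,u)) = ∑_m A_{|m|} (|m|!/∏ mⱼ!) c^m ∑_{p+q=‖m‖} W_p(m) z^p u^q`, i.e. for all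
`p, q` the coefficient of `z^p u^q` in `H(Θ(z,u))` equals
`∑_{m : ‖m‖ = p+q} A_{|m|} · (|m|!/∏ⱼ mⱼ!) · c^m · W_p(m)`, the sum over finitely
supported sequences `m = (m₁, m₂, …)` (i.e. `m 0 = 0`). -/
theorem coeff_H_ThetaQuot (c A : ℕ → ℂ) (p q : ℕ) :
    MvPowerSeries.coeff (R := ℂ) (Finsupp.single 0 p + Finsupp.single 1 q)
        (compMv A (ThetaQuot c - 1)) =
      ∑ᶠ (m : ℕ →₀ ℕ) (_ : m 0 = 0 ∧ (m.sum fun j e => j * e) = p + q),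
        A (m.sum fun _ e => e) * (m.multinomial : ℂ) *
          (∏ j ∈ m.support, c j ^ m j) * Wcoeff m p := by
  classical
  set F : (ℕ →₀ ℕ) → ℂ := fun m => A (m.sum fun _ e => e) * (m.multinomial : ℂ) *
    (∏ j ∈ m.support, c j ^ m j) * Wcoeff m p with hF
  set t : Finset (ℕ →₀ ℕ) := (Finset.range (p+q+1)).biUnion (fun k =>
    (Finset.finsuppAntidiag (Finset.Icc 1 (p+q)) k).filter
      (fun M => (M.sum fun j e => j * e) = p + q)) with ht
  have hiff : ∀ M : ℕ →₀ ℕ,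
      (M 0 = 0 ∧ (M.sum fun j e => j * e) = p + q) ↔ M ∈ t := by
    intro M
    rw [ht, Finset.mem_biUnion]
    constructor
    · rintro ⟨h0, hw⟩
      have hsupp : M.support ⊆ Finset.Icc 1 (p+q) := by
        intro j hj
        have hj0 : M j ≠ 0 := Finsupp.mem_support_iff.mp hj
        have hj1 : 1 ≤ j := by
          rcases Nat.eq_zero_or_pos j with rfl | h
          · exact absurd h0 hj0
          · exact h
        have hle : j * M j ≤ M.sum fun j e => j * e :=
          Finset.single_le_sum (f := fun i => i * M i) (fun i _ => Nat.zero_le _) hj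
        have : j ≤ j * M j := Nat.le_mul_of_pos_right j (Nat.pos_of_ne_zero hj0)
        exact Finset.mem_Icc.mpr ⟨hj1, by omega⟩
      refine ⟨M.sum fun _ e => e, ?_, ?_⟩
      · rw [Finset.mem_range, Nat.lt_succ_iff]
        have : (M.sum fun _ e => e) ≤ M.sum fun j e => j * e := by
          refine Finset.sum_le_sum fun i hi => ?_
          have h1 : 1 ≤ i := (Finset.mem_Icc.mp (hsupp hi)).1
          exact Nat.le_mul_of_pos_left (M i) h1
        omega
      · rw [Finset.mem_filter, Finset.mem_finsuppAntidiag]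
        exact ⟨⟨(Finsupp.sum_of_support_subset M hsupp (fun _ e => e) fun _ _ => rfl).symm, hsupp⟩, hw⟩
    · rintro ⟨k, _, hM⟩
      rw [Finset.mem_filter, Finset.mem_finsuppAntidiag] at hM
      obtain ⟨⟨_, hsupp⟩, hw⟩ := hM
      refine ⟨?_, hw⟩
      by_contra h0
      have : (0 : ℕ) ∈ M.support := Finsupp.mem_support_iff.mpr h0
      have := hsupp this
      simp at this
  rw [finsum_cond_eq_sum_of_cond_iff F (fun {x} _ => hiff x)]
  -- unfold the LHS
  have hL : MvPowerSeries.coeff (R := ℂ) (Finsupp.single (0:Fin 2) p + Finsupp.single 1 q)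
      (compMv A (ThetaQuot c - 1))
      = ∑ k ∈ Finset.range (p + q + 1), A k *
          MvPowerSeries.coeff (R := ℂ) (Finsupp.single (0:Fin 2) p + Finsupp.single 1 q)
            ((ThetaQuot c - 1) ^ k) := by
    have h0 : MvPowerSeries.coeff (R := ℂ) (Finsupp.single (0:Fin 2) p + Finsupp.single 1 q)
        (compMv A (ThetaQuot c - 1))
        = ∑ k ∈ Finset.range
            (((Finsupp.single (0:Fin 2) p + Finsupp.single 1 q : Fin 2 →₀ ℕ) 0
              + (Finsupp.single (0:Fin 2) p + Finsupp.single 1 q : Fin 2 →₀ ℕ) 1) + 1),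
            A k * MvPowerSeries.coeff (R := ℂ) (Finsupp.single (0:Fin 2) p + Finsupp.single 1 q)
              ((ThetaQuot c - 1) ^ k) := rfl
    rw [h0, (dcoords p q).1, (dcoords p q).2]
  rw [hL]
  simp_rw [coeff_theta_pow, coeff_Tpow, Finset.mul_sum]
  -- move the if outside
  have hstep : ∀ k ∈ Finset.range (p+q+1),
      (∑ M ∈ Finset.finsuppAntidiag (Finset.Icc 1 (p+q)) k,
        A k * ((M.multinomial : ℂ) * (∏ j ∈ M.support, c j ^ M j) *
          (if (M.sum fun j e => j * e) = p + q then Wcoeff M p else 0)))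
      = ∑ M ∈ (Finset.finsuppAntidiag (Finset.Icc 1 (p+q)) k).filter
          (fun M => (M.sum fun j e => j * e) = p + q), F M := by
    intro k hk
    rw [Finset.sum_filter]
    refine Finset.sum_congr rfl fun M hM => ?_
    have hkM : (M.sum fun _ e => e) = k := by
      obtain ⟨hsum, hsupp⟩ := Finset.mem_finsuppAntidiag.mp hM
      rw [Finsupp.sum_of_support_subset M hsupp _ fun _ _ => rfl]
      exact hsum
    by_cases h : (M.sum fun j e => j * e) = p + q
    · rw [if_pos h, if_pos h, hF]
      simp only [hkM]
      ring
    · rw [if_neg h, if_neg h, mul_zero, mul_zero]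
  rw [Finset.sum_congr rfl hstep, ht, Finset.sum_biUnion]
  -- disjointness
  intro k1 hk1 k2 hk2 hne
  simp only [Function.onFun]
  rw [Finset.disjoint_left]
  intro M h1 h2
  rw [Finset.mem_filter, Finset.mem_finsuppAntidiag] at h1 h2
  exact hne (h1.1.1.symm.trans h2.1.1)
end

section
/- For a formal power series h(X) = 1 + b_1 X + b_2 X² + … over a commutative ℚ-algebra, the Faber polynomials satisfy the explicit formula (1/n)·𝒬_n(b_1, …, b_n) = ∑_{μ: ∑_j j·μ_j = n} (−1)^{∑_j μ_j} · (∑_j μ_j − 1)! · ∏_j (b_j^{μ_j}/μ_j!), where the sum is over all finitely supported sequences μ = (μ_1, …, μ_n) of nonnegative integers with ∑_j j·μ_j = n (each such μ is nonzero, so (∑μ_j − 1)! is well defined). -/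
open PowerSeries Finset

/-- The power series `h(X) = 1 + b₁ X + b₂ X² + ⋯` attached to a sequence `b`. -/
noncomputable def hSeries {R : Type*} [CommRing R] (b : ℕ → R) : PowerSeries R :=
  PowerSeries.mk fun n => if n = 0 then 1 else b n

/-- The Faber polynomials `𝒬ₙ(b)`, defined by
`−X·h'(X)/h(X) = ∑_{n≥1} 𝒬ₙ(b) Xⁿ` where `h(X) = 1 + b₁X + b₂X² + ⋯`; the inverse
`1/h` exists since the constant term of `h` is `1`. -/
noncomputable def faberQ {R : Type*} [CommRing R] (b : ℕ → R) (n : ℕ) : R :=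
  PowerSeries.coeff (R := R) n
    (-(PowerSeries.X * (hSeries b).derivativeFun) * (hSeries b).invOfUnit 1)

section Aux

variable {R : Type*} [CommRing R]

/-- The tail series `g = b₁X + b₂X² + ⋯`. -/
noncomputable def gS (b : ℕ → R) : PowerSeries R :=
  PowerSeries.mk fun n => if n = 0 then 0 else b n

lemma hSeries_eq (b : ℕ → R) : hSeries b = 1 + gS b := by
  ext n
  cases n <;> simp [hSeries, gS, coeff_mk]

lemma coeff_gS_pow_eq_zero (b : ℕ → R) {k m : ℕ} (h : m < k) :
    coeff m ((gS b) ^ k) = 0 := by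
  have hX : (X : PowerSeries R) ∣ gS b := by
    rw [PowerSeries.X_dvd_iff]
    simp [gS]
  have : (X : PowerSeries R) ^ k ∣ (gS b) ^ k := pow_dvd_pow_of_dvd hX k
  exact (PowerSeries.X_pow_dvd_iff.mp this) m h

lemma coeff_mul_congr {A B C : PowerSeries R} {m : ℕ}
    (h : ∀ j ≤ m, coeff j B = coeff j C) :
    coeff m (A * B) = coeff m (A * C) := by
  rw [coeff_mul, coeff_mul]
  refine Finset.sum_congr rfl fun p hp => ?_
  rw [h p.2 ?_]
  have := Finset.HasAntidiagonal.mem_antidiagonal.mp hp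
  omega

lemma coeff_mul_congr' {A B C : PowerSeries R} {m : ℕ}
    (h : ∀ j ≤ m, coeff j B = coeff j C) :
    coeff m (B * A) = coeff m (C * A) := by
  rw [mul_comm B A, mul_comm C A]; exact coeff_mul_congr h

lemma coeff_pow_congr {A B : PowerSeries R} {m : ℕ}
    (h : ∀ j ≤ m, coeff j A = coeff j B) (k : ℕ) :
    ∀ j ≤ m, coeff j (A ^ k) = coeff j (B ^ k) := by
  induction k with
  | zero => intro j _; simp
  | succ k ih =>
    intro j hj
    rw [pow_succ, pow_succ]
    calc coeff j (A ^ k * A) = coeff j (A ^ k * B) :=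
          coeff_mul_congr (fun i hi => h i (hi.trans hj))
    _ = coeff j (B ^ k * B) := coeff_mul_congr' (fun i hi => ih i (hi.trans hj))

/-- Partial geometric sums of `-g`. -/
noncomputable def pgs (b : ℕ → R) (N : ℕ) : PowerSeries R :=
  ∑ k ∈ Finset.range N, (-(gS b)) ^ k

lemma h_mul_pgs (b : ℕ → R) (N : ℕ) :
    hSeries b * pgs b N = 1 - (-(gS b)) ^ N := by
  have h := geom_sum_mul (-(gS b)) N
  rw [hSeries_eq]
  unfold pgs
  linear_combination -h

lemma coeff_neg_gS_pow (b : ℕ → R) {k m : ℕ} (h : m < k) :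
    coeff m ((-(gS b)) ^ k) = 0 := by
  have hX : (X : PowerSeries R) ∣ gS b := by
    rw [PowerSeries.X_dvd_iff]
    simp [gS]
  have : (X : PowerSeries R) ^ k ∣ (-(gS b)) ^ k := by
    rw [neg_pow]
    exact ((pow_dvd_pow_of_dvd hX k).mul_left _)
  exact (PowerSeries.X_pow_dvd_iff.mp this) m h

lemma coeff_pgs_stable (b : ℕ → R) {m N N' : ℕ} (h : m < N) (h' : m < N') :
    coeff m (pgs b N) = coeff m (pgs b N') := by
  unfold pgs
  rw [map_sum, map_sum]
  rcases le_total N N' with hle | hle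
  · refine (Finset.sum_subset (Finset.range_subset_range.mpr hle) fun k _ hk => ?_)
    rw [Finset.mem_range, not_lt] at hk
    exact coeff_neg_gS_pow b (lt_of_lt_of_le h hk)
  · refine (Finset.sum_subset (Finset.range_subset_range.mpr hle) fun k _ hk => ?_).symm
    rw [Finset.mem_range, not_lt] at hk
    exact coeff_neg_gS_pow b (lt_of_lt_of_le h' hk)

/-- The inverse of `h`, defined coefficientwise via partial geometric sums. -/
noncomputable def Sinv (b : ℕ → R) : PowerSeries R :=
  PowerSeries.mk fun m => coeff m (pgs b (m + 1))

lemma coeff_Sinv (b : ℕ → R) {m N : ℕ} (h : m < N) :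
    coeff m (Sinv b) = coeff m (pgs b N) := by
  rw [Sinv, coeff_mk]
  exact coeff_pgs_stable b (Nat.lt_succ_self m) h

lemma h_mul_Sinv (b : ℕ → R) : hSeries b * Sinv b = 1 := by
  ext m
  have : coeff m (hSeries b * Sinv b) = coeff m (hSeries b * pgs b (m + 1)) :=
    coeff_mul_congr fun j hj => coeff_Sinv b (Nat.lt_succ_of_le hj)
  rw [this, h_mul_pgs, map_sub, coeff_neg_gS_pow b (Nat.lt_succ_of_le (le_refl m)), sub_zero]

lemma invOfUnit_eq_Sinv (b : ℕ → R) : (hSeries b).invOfUnit 1 = Sinv b := by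
  have h1 : constantCoeff (hSeries b) = (1 : Rˣ) := by
    simp [hSeries, ← coeff_zero_eq_constantCoeff]
  have h2 := PowerSeries.mul_invOfUnit (hSeries b) 1 h1
  calc (hSeries b).invOfUnit 1 = 1 * (hSeries b).invOfUnit 1 := (one_mul _).symm
  _ = (hSeries b * Sinv b) * (hSeries b).invOfUnit 1 := by rw [h_mul_Sinv]
  _ = Sinv b * (hSeries b * (hSeries b).invOfUnit 1) := by ring
  _ = Sinv b := by rw [h2, mul_one]

lemma derivativeFun_hSeries (b : ℕ → R) :
    (hSeries b).derivativeFun = (gS b).derivativeFun := by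
  rw [hSeries_eq, derivativeFun_add, derivativeFun_one, zero_add]

lemma derivativeFun_pow' (f : PowerSeries R) (k : ℕ) :
    derivativeFun (f ^ (k + 1)) = ((k : ℕ) + 1 : ℕ) * f ^ k * derivativeFun f := by
  induction k with
  | zero => simp
  | succ k ih =>
    rw [pow_succ, derivativeFun_mul, ih]
    simp only [smul_eq_mul]
    push_cast
    ring

lemma coeff_X_mul_derivativeFun (F : PowerSeries R) {n : ℕ} (hn : 1 ≤ n) :
    coeff n (X * derivativeFun F) = n • coeff n F := by
  obtain ⟨m, rfl⟩ : ∃ m, n = m + 1 := ⟨n - 1, by omega⟩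
  rw [coeff_succ_X_mul, @id (coeff m F.derivativeFun = coeff (m + 1) F * (m + 1)) (coeff_derivative F m), nsmul_eq_mul, mul_comm]
  push_cast
  ring

lemma key_smul (b : ℕ → R) {n : ℕ} (k : ℕ) (hn : 1 ≤ n) :
    (k + 1) • coeff n (X * derivativeFun (gS b) * (gS b) ^ k)
      = n • coeff n ((gS b) ^ (k + 1)) := by
  have e : X * derivativeFun ((gS b) ^ (k + 1))
      = (((k : ℕ) + 1 : ℕ) : PowerSeries R) * (X * derivativeFun (gS b) * (gS b) ^ k) := by
    rw [derivativeFun_pow']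
    push_cast
    ring
  have h1 := coeff_X_mul_derivativeFun ((gS b) ^ (k + 1)) hn
  rw [e] at h1
  have hC : (((k : ℕ) + 1 : ℕ) : PowerSeries R) = C (((k : ℕ) + 1 : ℕ) : R) := by
    rw [map_natCast]
  rw [hC, coeff_C_mul] at h1
  rw [← h1, nsmul_eq_mul]

/-- Truncation polynomial of `g`. -/
noncomputable def qS (b : ℕ → R) (n : ℕ) : PowerSeries R :=
  ∑ j ∈ Finset.Icc 1 n, C (b j) * X ^ j

lemma coeff_gS_eq_coeff_qS (b : ℕ → R) {n j : ℕ} (hj : j ≤ n) :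
    coeff j (gS b) = coeff j (qS b n) := by
  rw [qS, map_sum]
  simp only [coeff_C_mul_X_pow]
  rw [Finset.sum_ite_eq (Finset.Icc 1 n) j b]
  rw [gS, coeff_mk]
  by_cases h0 : j = 0
  · subst h0; simp
  · rw [if_neg h0, if_pos (Finset.mem_Icc.mpr ⟨by omega, hj⟩)]

lemma prod_C_mul_X_pow (b : ℕ → R) (s : Finset ℕ) (f : ℕ → ℕ) :
    ∏ j ∈ s, (C (b j) * X ^ j) ^ (f j)
      = C (∏ j ∈ s, b j ^ f j) * X ^ (∑ j ∈ s, j * f j) := by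
  have e : ∀ j ∈ s, (C (b j) * X ^ j) ^ (f j) = C (b j ^ f j) * X ^ (j * f j) := by
    intro j _
    rw [mul_pow, ← map_pow, ← pow_mul]
  rw [Finset.prod_congr rfl e, Finset.prod_mul_distrib, ← map_prod,
    Finset.prod_pow_eq_pow_sum]

lemma coeff_qS_pow (b : ℕ → R) (n K : ℕ) :
    coeff n ((qS b n) ^ K)
      = ∑ f ∈ Finset.piAntidiag (Finset.Icc 1 n) K,
          if (∑ j ∈ Finset.Icc 1 n, j * f j) = n
          then (Nat.multinomial (Finset.Icc 1 n) f : R) * ∏ j ∈ Finset.Icc 1 n, b j ^ f j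
          else 0 := by
  rw [qS, Finset.sum_pow_eq_sum_piAntidiag, map_sum]
  refine Finset.sum_congr rfl fun f _ => ?_
  rw [prod_C_mul_X_pow]
  have hC : (Nat.multinomial (Finset.Icc 1 n) f : PowerSeries R)
      = C (Nat.multinomial (Finset.Icc 1 n) f : R) := by
    rw [map_natCast]
  rw [hC, ← mul_assoc, ← map_mul, coeff_C_mul_X_pow]
  by_cases h : (∑ j ∈ Finset.Icc 1 n, j * f j) = n
  · rw [if_pos h.symm, if_pos h]
  · rw [if_neg (Ne.symm h), if_neg h]

lemma coeff_gS_pow (b : ℕ → R) (n K : ℕ) :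
    coeff n ((gS b) ^ K)
      = ∑ f ∈ Finset.piAntidiag (Finset.Icc 1 n) K,
          if (∑ j ∈ Finset.Icc 1 n, j * f j) = n
          then (Nat.multinomial (Finset.Icc 1 n) f : R) * ∏ j ∈ Finset.Icc 1 n, b j ^ f j
          else 0 := by
  rw [← coeff_qS_pow]
  exact coeff_pow_congr (fun j hj => coeff_gS_eq_coeff_qS b hj) K n (le_refl n)

variable [Algebra ℚ R]

lemma key_smul_q (b : ℕ → R) {n : ℕ} (k : ℕ) (hn : 1 ≤ n) :
    coeff n (X * derivativeFun (gS b) * (gS b) ^ k)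
      = ((n : ℚ) * ((k : ℚ) + 1)⁻¹) • coeff n ((gS b) ^ (k + 1)) := by
  have h := key_smul b k hn
  have h' : ((k : ℚ) + 1) • coeff n (X * derivativeFun (gS b) * (gS b) ^ k)
      = (n : ℚ) • coeff n ((gS b) ^ (k + 1)) := by
    rw [← Nat.cast_smul_eq_nsmul ℚ, ← Nat.cast_smul_eq_nsmul ℚ] at h
    push_cast at h
    exact h
  have hk : ((k : ℚ) + 1) ≠ 0 := by positivity
  calc coeff n (X * derivativeFun (gS b) * (gS b) ^ k)
      = (((k : ℚ) + 1)⁻¹ * ((k : ℚ) + 1)) • coeff n (X * derivativeFun (gS b) * (gS b) ^ k) := by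
        rw [inv_mul_cancel₀ hk, one_smul]
    _ = ((k : ℚ) + 1)⁻¹ • (((k : ℚ) + 1) • coeff n (X * derivativeFun (gS b) * (gS b) ^ k)) := by
        rw [mul_smul]
    _ = ((k : ℚ) + 1)⁻¹ • ((n : ℚ) • coeff n ((gS b) ^ (k + 1))) := by rw [h']
    _ = ((n : ℚ) * ((k : ℚ) + 1)⁻¹) • coeff n ((gS b) ^ (k + 1)) := by
        rw [← mul_smul, mul_comm]

lemma faberQ_eq_sum (b : ℕ → R) {n : ℕ} (hn : 1 ≤ n) :
    ((n : ℚ)⁻¹ : ℚ) • faberQ b n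
      = ∑ k ∈ Finset.range (n + 1),
          ((-1 : ℚ) ^ (k + 1) * ((k : ℚ) + 1)⁻¹) • coeff n ((gS b) ^ (k + 1)) := by
  have h0 : faberQ b n
      = ∑ k ∈ Finset.range (n + 1),
          coeff n (-(X * (hSeries b).derivativeFun) * (-(gS b)) ^ k) := by
    rw [faberQ, invOfUnit_eq_Sinv]
    rw [coeff_mul_congr (B := Sinv b) (C := pgs b (n + 1))
      (fun j hj => coeff_Sinv b (Nat.lt_succ_of_le hj))]
    rw [pgs, Finset.mul_sum, map_sum]
  have h1 : ∀ k, coeff n (-(X * (hSeries b).derivativeFun) * (-(gS b)) ^ k)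
      = (-1 : R) ^ (k + 1) * coeff n (X * derivativeFun (gS b) * (gS b) ^ k) := by
    intro k
    have e : -(X * (hSeries b).derivativeFun) * (-(gS b)) ^ k
        = ((-1 : PowerSeries R) ^ (k + 1)) * (X * derivativeFun (gS b) * (gS b) ^ k) := by
      rw [derivativeFun_hSeries]
      ring
    have hC : ((-1 : PowerSeries R) ^ (k + 1)) = C ((-1 : R) ^ (k + 1)) := by
      rw [map_pow, map_neg, map_one]
    rw [e, hC, coeff_C_mul]
  rw [h0, Finset.smul_sum]
  refine Finset.sum_congr rfl fun k _ => ?_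
  rw [h1 k, key_smul_q b k hn]
  have hmo : (-1 : R) ^ (k + 1) = algebraMap ℚ R ((-1 : ℚ) ^ (k + 1)) := by
    rw [map_pow, map_neg, map_one]
  rw [hmo, ← Algebra.smul_def, smul_smul, smul_smul]
  congr 1
  have hn' : (n : ℚ) ≠ 0 := by positivity
  field_simp

end Aux

open Classical in
/-- Conversion of a function to a finitely supported function. -/
noncomputable def toFsupp (f : ℕ → ℕ) : ℕ →₀ ℕ :=
  if h : (Function.support f).Finite then Finsupp.ofSupportFinite f h else 0

lemma toFsupp_apply {f : ℕ → ℕ} (h : (Function.support f).Finite) (j : ℕ) :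
    toFsupp f j = f j := by
  rw [toFsupp, dif_pos h]
  rfl

/-- Explicit formula for the Faber polynomials:
`(1/n)·𝒬ₙ(b) = ∑_{μ : ∑ j·μⱼ = n} (−1)^{∑ μⱼ} (∑ μⱼ − 1)! ∏ⱼ bⱼ^{μⱼ}/μⱼ!`,
the sum being over finitely supported sequences `μ = (μ₁, μ₂, …)` of nonnegative
integers (indexed by `j ≥ 1`, i.e. `μ 0 = 0`) with `∑ j·μⱼ = n`. -/
theorem faberQ_explicit {R : Type*} [CommRing R] [Algebra ℚ R] (b : ℕ → R) (n : ℕ)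
    (hn : 1 ≤ n) :
    ((n : ℚ)⁻¹ : ℚ) • faberQ b n =
      ∑ᶠ (μ : ℕ →₀ ℕ) (_ : μ 0 = 0 ∧ (μ.sum fun j m => j * m) = n),
        (((-1 : ℚ) ^ (μ.sum fun _ m => m) *
            (((μ.sum fun _ m => m) - 1).factorial : ℚ) *
            (∏ j ∈ μ.support, ((μ j).factorial : ℚ))⁻¹) •
          ∏ j ∈ μ.support, b j ^ (μ j)) := by
  classical
  set F : (ℕ →₀ ℕ) → R := fun μ =>
    (((-1 : ℚ) ^ (μ.sum fun _ m => m) *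
        (((μ.sum fun _ m => m) - 1).factorial : ℚ) *
        (∏ j ∈ μ.support, ((μ j).factorial : ℚ))⁻¹) •
      ∏ j ∈ μ.support, b j ^ (μ j)) with hF
  set T : Finset (ℕ →₀ ℕ) :=
    ((Finset.Icc 1 n).finsupp (fun _ => Finset.range (n + 1))).filter
      (fun μ => μ 0 = 0 ∧ (μ.sum fun j m => j * m) = n) with hT
  -- membership characterization
  have hTmem : ∀ μ : ℕ →₀ ℕ, μ ∈ T ↔ (μ 0 = 0 ∧ (μ.sum fun j m => j * m) = n) := by
    intro μ
    rw [hT, Finset.mem_filter]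
    constructor
    · exact fun h => h.2
    · intro h
      refine ⟨Finset.mem_finsupp_iff.mpr ⟨?_, ?_⟩, h⟩
      · intro j hj
        have hμj : μ j ≠ 0 := Finsupp.mem_support_iff.mp hj
        have hj0 : j ≠ 0 := fun e => hμj (e ▸ h.1)
        have hle : j * μ j ≤ μ.sum fun j m => j * m := by
          rw [Finsupp.sum]
          exact Finset.single_le_sum (f := fun a => a * μ a) (fun i _ => Nat.zero_le _) hj
        rw [h.2] at hle
        refine Finset.mem_Icc.mpr ⟨by omega, ?_⟩
        calc j ≤ j * μ j := Nat.le_mul_of_pos_right j (Nat.pos_of_ne_zero hμj)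
        _ ≤ n := hle
      · intro i hi
        rw [Finset.mem_range]
        by_cases h0 : μ i = 0
        · omega
        · have hi' : i ∈ μ.support := Finsupp.mem_support_iff.mpr h0
          have hle : i * μ i ≤ μ.sum fun j m => j * m := by
            rw [Finsupp.sum]
            exact Finset.single_le_sum (f := fun a => a * μ a) (fun i _ => Nat.zero_le _) hi'
          rw [h.2] at hle
          have h1 : 1 ≤ i := (Finset.mem_Icc.mp hi).1
          have : μ i ≤ i * μ i := Nat.le_mul_of_pos_left _ (by omega)
          omega
  -- support subset for members of T
  have hTsupp : ∀ μ ∈ T, μ.support ⊆ Finset.Icc 1 n := by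
    intro μ hμ
    rw [hT, Finset.mem_filter] at hμ
    exact (Finset.mem_finsupp_iff.mp hμ.1).1
  -- |μ| facts
  have hTcard : ∀ μ ∈ T, 1 ≤ (μ.sum fun _ m => m) ∧ (μ.sum fun _ m => m) ≤ n := by
    intro μ hμ
    have hm := (hTmem μ).mp hμ
    constructor
    · by_contra hc
      push_neg at hc
      have h : (μ.sum fun _ m => m) = 0 := by omega
      have hsupp : ∀ j ∈ μ.support, μ j = 0 := by
        rw [Finsupp.sum] at h
        intro j hj
        exact (Finset.sum_eq_zero_iff).mp h j hj
      have hz : μ = 0 := by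
        ext j
        by_cases hj : j ∈ μ.support
        · exact hsupp j hj
        · simpa using Finsupp.notMem_support_iff.mp hj
      rw [hz] at hm
      simp [Finsupp.sum] at hm
      omega
    · rw [← hm.2, Finsupp.sum, Finsupp.sum]
      refine Finset.sum_le_sum fun j hj => ?_
      have hμj : μ j ≠ 0 := Finsupp.mem_support_iff.mp hj
      have hj0 : j ≠ 0 := fun e => hμj (e ▸ hm.1)
      exact Nat.le_mul_of_pos_left _ (by omega)
  -- turn the finsum into a sum over T
  rw [finsum_cond_eq_sum_of_cond_iff _ (fun {μ} _ => (hTmem μ).symm)]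
  rw [faberQ_eq_sum b hn]
  have hmaps : ∀ μ ∈ T, (μ.sum fun _ m => m) - 1 ∈ Finset.range (n + 1) := by
    intro μ hμ
    have := hTcard μ hμ
    rw [Finset.mem_range]
    omega
  rw [← Finset.sum_fiberwise_of_maps_to hmaps F]
  refine Finset.sum_congr rfl fun k _ => ?_
  have hfib : T.filter (fun μ => (μ.sum fun _ m => m) - 1 = k)
      = T.filter (fun μ => (μ.sum fun _ m => m) = k + 1) := by
    refine Finset.filter_congr fun μ hμ => ?_
    have := hTcard μ hμ
    constructor <;> intro h <;> omega
  rw [hfib, coeff_gS_pow b n (k + 1), Finset.smul_sum]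
  simp only [smul_ite, smul_zero]
  rw [← Finset.sum_filter]
  -- the bijection
  refine Finset.sum_nbij' toFsupp (fun μ => ⇑μ) ?_ ?_ ?_ ?_ ?_
  · -- hi
    intro f hf
    rw [Finset.mem_filter, Finset.mem_piAntidiag] at hf
    obtain ⟨⟨hsum, hsupp⟩, hcond⟩ := hf
    have hfin : (Function.support f).Finite :=
      Set.Finite.subset (Finset.Icc 1 n).finite_toSet (fun j hj => hsupp j hj)
    have happ : ∀ j, toFsupp f j = f j := toFsupp_apply hfin
    have hsub : (toFsupp f).support ⊆ Finset.Icc 1 n := by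
      intro j hj
      rw [Finsupp.mem_support_iff, happ] at hj
      exact hsupp j hj
    have hwsum : ((toFsupp f).sum fun j m => j * m) = n := by
      rw [Finsupp.sum_of_support_subset _ hsub _ (fun i _ => by simp)]
      calc ∑ j ∈ Finset.Icc 1 n, j * toFsupp f j = ∑ j ∈ Finset.Icc 1 n, j * f j :=
            Finset.sum_congr rfl fun j _ => by rw [happ]
      _ = n := hcond
    have hcsum : ((toFsupp f).sum fun _ m => m) = k + 1 := by
      rw [Finsupp.sum_of_support_subset _ hsub _ (fun i _ => rfl)]
      calc ∑ j ∈ Finset.Icc 1 n, toFsupp f j = ∑ j ∈ Finset.Icc 1 n, f j :=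
            Finset.sum_congr rfl fun j _ => by rw [happ]
      _ = k + 1 := hsum
    rw [Finset.mem_filter]
    refine ⟨(hTmem _).mpr ⟨?_, hwsum⟩, hcsum⟩
    rw [happ]
    by_contra h0
    have := hsupp 0 h0
    simp at this
  · -- hj
    intro μ hμ
    rw [Finset.mem_filter] at hμ
    obtain ⟨hμT, hcs⟩ := hμ
    have hm := (hTmem μ).mp hμT
    have hsub := hTsupp μ hμT
    rw [Finset.mem_filter, Finset.mem_piAntidiag]
    refine ⟨⟨?_, ?_⟩, ?_⟩
    · rw [Finsupp.sum_of_support_subset _ hsub _ (fun i _ => rfl)] at hcs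
      exact hcs
    · intro i hi
      exact hsub (Finsupp.mem_support_iff.mpr hi)
    · have h2 := hm.2
      rw [Finsupp.sum_of_support_subset _ hsub _ (fun i _ => by simp)] at h2
      exact h2
  · -- left_inv
    intro f hf
    rw [Finset.mem_filter, Finset.mem_piAntidiag] at hf
    have hfin : (Function.support f).Finite :=
      Set.Finite.subset (Finset.Icc 1 n).finite_toSet (fun j hj => hf.1.2 j hj)
    funext j
    exact toFsupp_apply hfin j
  · -- right_inv
    intro μ _
    ext j
    exact toFsupp_apply μ.finite_support j
  · -- values
    intro f hf
    rw [Finset.mem_filter, Finset.mem_piAntidiag] at hf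
    obtain ⟨⟨hsum, hsupp⟩, hcond⟩ := hf
    have hfin : (Function.support f).Finite :=
      Set.Finite.subset (Finset.Icc 1 n).finite_toSet (fun j hj => hsupp j hj)
    have happ : ∀ j, toFsupp f j = f j := toFsupp_apply hfin
    set μ := toFsupp f with hμ
    have hsub : μ.support ⊆ Finset.Icc 1 n := by
      intro j hj
      rw [Finsupp.mem_support_iff, happ] at hj
      exact hsupp j hj
    have hcsum : (μ.sum fun _ m => m) = k + 1 := by
      rw [Finsupp.sum_of_support_subset _ hsub _ (fun i _ => rfl), ← hsum]
      exact Finset.sum_congr rfl fun j _ => by rw [happ]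
    have hprodb : ∏ j ∈ Finset.Icc 1 n, b j ^ f j = ∏ j ∈ μ.support, b j ^ μ j := by
      calc ∏ j ∈ Finset.Icc 1 n, b j ^ f j = ∏ j ∈ Finset.Icc 1 n, b j ^ μ j :=
            Finset.prod_congr rfl fun j _ => by rw [happ]
      _ = ∏ j ∈ μ.support, b j ^ μ j := by
            refine (Finset.prod_subset hsub fun j _ hj => ?_).symm
            rw [Finsupp.notMem_support_iff.mp hj, pow_zero]
    have hprodfact : (∏ j ∈ Finset.Icc 1 n, ((f j).factorial : ℚ))
        = ∏ j ∈ μ.support, ((μ j).factorial : ℚ) := by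
      calc ∏ j ∈ Finset.Icc 1 n, ((f j).factorial : ℚ)
          = ∏ j ∈ Finset.Icc 1 n, ((μ j).factorial : ℚ) :=
            Finset.prod_congr rfl fun j _ => by rw [happ]
      _ = ∏ j ∈ μ.support, ((μ j).factorial : ℚ) := by
            refine (Finset.prod_subset hsub fun j _ hj => ?_).symm
            rw [Finsupp.notMem_support_iff.mp hj]
            norm_num
    have hms := Nat.multinomial_spec (Finset.Icc 1 n) f
    have hprodpos : (0 : ℚ) < ∏ j ∈ μ.support, ((μ j).factorial : ℚ) := by
      refine Finset.prod_pos fun j _ => ?_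
      exact_mod_cast Nat.factorial_pos _
    have hmq : (∏ j ∈ μ.support, ((μ j).factorial : ℚ)) * (Nat.multinomial (Finset.Icc 1 n) f : ℚ)
        = ((k + 1).factorial : ℚ) := by
      rw [← hprodfact]
      rw_mod_cast [hms]
      rw [hsum]
    have hF' : F μ = (((-1 : ℚ) ^ (k + 1) * ((k).factorial : ℚ) *
        (∏ j ∈ μ.support, ((μ j).factorial : ℚ))⁻¹) • ∏ j ∈ μ.support, b j ^ μ j) := by
      rw [hF]
      simp only
      rw [hcsum]
      norm_num
    rw [hF', ← hprodb]
    have hmulsmul : (Nat.multinomial (Finset.Icc 1 n) f : R) * ∏ j ∈ Finset.Icc 1 n, b j ^ f j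
        = (Nat.multinomial (Finset.Icc 1 n) f : ℚ) • ∏ j ∈ Finset.Icc 1 n, b j ^ f j := by
      rw [Nat.cast_smul_eq_nsmul, nsmul_eq_mul]
    rw [hmulsmul, smul_smul]
    congr 1
    have hne : (∏ j ∈ μ.support, ((μ j).factorial : ℚ)) ≠ 0 := ne_of_gt hprodpos
    have hmult : (Nat.multinomial (Finset.Icc 1 n) f : ℚ)
        = ((k + 1).factorial : ℚ) / (∏ j ∈ μ.support, ((μ j).factorial : ℚ)) := by
      field_simp
      linarith [hmq]
    rw [hmult, Nat.factorial_succ]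
    push_cast
    field_simp
end
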